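/- arXiv:1812.04390 — 3 statements merged into one kernel-verified Lean document; each statement's English description precedes it below -/
import Mathlib

section
/- For every integer n ≥ 1, every field F, every β ∈ F, all y_1, y_2, … ∈ F and all pairwise distinct x_1, …, x_n ∈ F, one has 1 = Σ_{i=1}^n [x_i|y]^{n−1} · ∏_{j≠i} (1+βx_j)/(x_i − x_j). -/
/-- `[x|y]^j = (x ⊕ y_1)⋯(x ⊕ y_j)` where `a ⊕ b = a + b + βab`; `y t` is `y_{t+1}`. -/
def fpow {F : Type*} [Field F] (β : F) (y : ℕ → F) (x : F) (j : ℕ) : F :=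
  ∏ t ∈ Finset.range j, (x + y t + β * x * y t)

open Polynomial Finset

lemma lemB {F : Type*} [Field F] {n : ℕ} (x : Fin n → F) (hx : Function.Injective x)
    (Q : Polynomial F) (hQ : Q.degree < n) :
    Q = ∑ i : Fin n, Polynomial.C (Q.eval (x i) * ∏ j ∈ Finset.univ.erase i, (x i - x j)⁻¹) *
      ∏ j ∈ Finset.univ.erase i, (Polynomial.X - Polynomial.C (x j)) := by
  have h0 : Q = Lagrange.interpolate Finset.univ x (fun i => Q.eval (x i)) :=
    Lagrange.eq_interpolate hx.injOn (by simpa using hQ)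
  refine h0.trans ?_
  rw [Lagrange.interpolate_apply]
  refine Finset.sum_congr rfl fun i _ => ?_
  rw [Lagrange.basis_eq_prod_sub_inv_mul_nodal_div (Finset.mem_univ i),
    ← Lagrange.nodal_erase_eq_nodal_div (Finset.mem_univ i), Lagrange.nodal_eq,
    Lagrange.nodalWeight, map_mul, mul_assoc]

/-- Generalized Good identity: `1 = Σ_{i=1}^n [x_i|y]^{n−1} ∏_{j≠i} (1+βx_j)/(x_i − x_j)`. -/
theorem stmt3 {F : Type*} [Field F] (n : ℕ) (hn : 1 ≤ n) (β : F) (y : ℕ → F)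
    (x : Fin n → F) (hx : Function.Injective x) :
    (1 : F) = ∑ i : Fin n, fpow β y (x i) (n - 1)
        * ∏ j ∈ Finset.univ.erase i, (1 + β * x j) / (x i - x j) := by
  have hcard : ∀ i : Fin n, (Finset.univ.erase i).card = n - 1 := fun i => by
    rw [Finset.card_erase_of_mem (Finset.mem_univ i), Finset.card_univ, Fintype.card_fin]
  set Q : Polynomial F := ∏ t ∈ Finset.range (n-1), (X + C (y t) + C β * X * C (y t)) with hQdef
  have hfac : ∀ t : ℕ, (X + C (y t) + C β * X * C (y t)).natDegree ≤ 1 := fun t => by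
    compute_degree
  have hdeg : Q.degree < n := by
    have h1 : Q.natDegree ≤ n - 1 := by
      refine le_trans (Polynomial.natDegree_prod_le _ _) ?_
      refine le_trans (Finset.sum_le_card_nsmul _ _ 1 fun t _ => hfac t) (by simp)
    have h2 : Q.degree ≤ ((n - 1 : ℕ) : WithBot ℕ) :=
      Polynomial.degree_le_natDegree.trans (Nat.cast_le.mpr h1)
    exact lt_of_le_of_lt h2 (Nat.cast_lt.mpr (Nat.sub_lt hn Nat.one_pos))
  have hevalQ : ∀ a : F, Q.eval a = fpow β y a (n-1) := fun a => by
    simp [hQdef, fpow, eval_prod]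
  have key := lemB x hx Q hdeg
  rcases eq_or_ne β 0 with rfl | hβ
  · -- leading coefficient argument
    have hQ0 : Q = ∏ t ∈ Finset.range (n-1), (X + C (y t)) := by
      rw [hQdef]; exact Finset.prod_congr rfl fun t _ => by simp
    have hmon : Q.Monic := hQ0 ▸ monic_prod_of_monic _ _ fun t _ => monic_X_add_C _
    have hnd : Q.natDegree = n - 1 := by
      rw [hQ0, natDegree_prod_of_monic _ _ (fun t _ => monic_X_add_C _)]
      simp
    have hco : Q.coeff (n-1) = 1 := by rw [← hnd]; exact hmon.coeff_natDegree
    have hN : ∀ i : Fin n, (∏ j ∈ Finset.univ.erase i, (X - C (x j))).coeff (n-1) = 1 := by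
      intro i
      have hm : (∏ j ∈ Finset.univ.erase i, (X - C (x j))).Monic :=
        monic_prod_of_monic _ _ fun j _ => monic_X_sub_C _
      have hdn : (∏ j ∈ Finset.univ.erase i, (X - C (x j))).natDegree = n - 1 := by
        rw [natDegree_prod_of_monic _ _ (fun j _ => monic_X_sub_C _)]
        simp [hcard i]
      rw [← hdn]; exact hm.coeff_natDegree
    have this1 := congrArg (fun p => Polynomial.coeff p (n-1)) key
    simp only [Polynomial.finset_sum_coeff, Polynomial.coeff_C_mul] at this1
    rw [hco, Finset.sum_congr rfl (fun i _ => by rw [hN i, mul_one, hevalQ])] at this1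
    simpa using this1
  · -- evaluation at -β⁻¹
    have hc : (-β⁻¹ : F) ≠ 0 := by simp [hβ]
    have hβc : β * -β⁻¹ = -1 := by rw [mul_neg, mul_inv_cancel₀ hβ]
    have this1 := congrArg (Polynomial.eval (-β⁻¹)) key
    rw [Polynomial.eval_finset_sum] at this1
    have hQc : Q.eval (-β⁻¹) = (-β⁻¹)^(n-1) := by
      rw [hQdef, eval_prod]
      rw [Finset.prod_congr rfl (fun t _ => ?_), Finset.prod_const, Finset.card_range]
      simp only [eval_add, eval_mul, eval_X, eval_C]
      rw [hβc]; ring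
    have hterm : ∀ i : Fin n,
        (Polynomial.C (Q.eval (x i) * ∏ j ∈ Finset.univ.erase i, (x i - x j)⁻¹) *
          ∏ j ∈ Finset.univ.erase i, (Polynomial.X - Polynomial.C (x j))).eval (-β⁻¹)
        = (-β⁻¹)^(n-1) * (fpow β y (x i) (n-1)
            * ∏ j ∈ Finset.univ.erase i, (1 + β * x j) / (x i - x j)) := by
      intro i
      rw [eval_mul, eval_C, hevalQ, eval_prod]
      simp only [eval_sub, eval_X, eval_C]
      have hjj : ∀ j ∈ Finset.univ.erase i, -β⁻¹ - x j = -β⁻¹ * (1 + β * x j) := fun j _ => by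
        linear_combination (x j) * inv_mul_cancel₀ hβ
      rw [Finset.prod_congr rfl hjj, Finset.prod_mul_distrib, Finset.prod_const, hcard i,
        Finset.prod_div_distrib, Finset.prod_inv_distrib]
      ring
    rw [hQc, Finset.sum_congr rfl (fun i _ => hterm i), ← Finset.mul_sum] at this1
    have := mul_left_cancel₀ (pow_ne_zero (n-1) hc)
      (show (-β⁻¹)^(n-1) * 1 = (-β⁻¹)^(n-1) * _ from (mul_one _).trans this1)
    exact this
end

section
/- Let 0 ≤ k ≤ n and m ≥ k be integers, and let λ = (λ_1 ≥ ⋯ ≥ λ_k ≥ 0) be a partition with λ_1 ≤ m − k. Set μ = (m−k, m−k, …, m−k, λ_1, λ_2, …, λ_k), the partition with n parts whose first n−k parts equal m−k followed by the parts of λ. Then G_μ(x_1,…,x_n|y) = Σ_{S ∈ binom([n],k)} G_λ(x_S|y) · (∏_{i∈S}(1+βx_i)^{n−k} · ∏_{j∈S̄}[x_j|y]^m) / (∏_{i∈S}∏_{j∈S̄}(x_j − x_i)), where G_λ(x_S|y) is the factorial Grothendieck polynomial in the k variables x_S. -/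
open Finset Equiv Matrix

/-- The factorial Grothendieck polynomial, given by the Ikeda–Naruse determinantal formula
`G_λ(x|y) = det([x_i|y]^{λ_j+n−j}(1+βx_i)^{j−1})_{1≤i,j≤n} / ∏_{i<j}(x_i − x_j)`. -/
noncomputable def Groth {F : Type*} [Field F] (β : F) (y : ℕ → F) {n : ℕ}
    (lam : Fin n → ℕ) (x : Fin n → F) : F :=
  (Matrix.of fun i j : Fin n =>
      fpow β y (x i) (lam j + (n - 1 - (j : ℕ))) * (1 + β * x i) ^ (j : ℕ)).det
    / ∏ i : Fin n, ∏ j ∈ Finset.Ioi i, (x i - x j)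

section Aux
variable {F : Type*} [Field F]

lemma Groth_eq (β : F) (y : ℕ → F) {n : ℕ} (lam : Fin n → ℕ) (x : Fin n → F) :
    Groth β y lam x = (Matrix.of fun i j : Fin n =>
      fpow β y (x i) (lam j + (n - 1 - (j : ℕ))) * (1 + β * x i) ^ (j : ℕ)).det
    / ∏ i : Fin n, ∏ j ∈ Finset.Ioi i, (x i - x j) := rfl

lemma fpow_add (β : F) (y : ℕ → F) (x : F) (a b : ℕ) :
    fpow β y x (a + b) = fpow β y x a * fpow β (fun t => y (a + t)) x b := by
  simp [fpow, Finset.prod_range_add]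


lemma prod_Ioi_rev {M : Type*} [CommMonoid M] {N : ℕ} (f : Fin N → Fin N → M) :
    (∏ i, ∏ j ∈ Finset.Ioi i, f (Fin.rev j) (Fin.rev i)) = ∏ i, ∏ j ∈ Finset.Ioi i, f i j := by
  rw [Finset.prod_sigma', Finset.prod_sigma']
  refine Finset.prod_nbij' (fun p => ⟨p.2.rev, p.1.rev⟩) (fun p => ⟨p.2.rev, p.1.rev⟩) ?_ ?_ ?_ ?_ ?_ <;>
    simp [Fin.rev_lt_rev]

lemma det_rev_vandermonde {r : ℕ} (z : Fin r → F) :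
    (Matrix.of fun i j : Fin r => z i ^ (r - 1 - (j : ℕ))).det
      = ∏ i, ∏ j ∈ Finset.Ioi i, (z i - z j) := by
  have h1 : (Matrix.of fun i j : Fin r => z i ^ (r - 1 - (j : ℕ)))
      = (Matrix.vandermonde (fun a => z a.rev)).submatrix Fin.rev Fin.rev := by
    ext i j
    simp only [Matrix.of_apply, Matrix.submatrix_apply, Matrix.vandermonde_apply, Fin.rev_rev]
    congr 1
    rw [Fin.val_rev]
    omega
  have h2 : (Matrix.vandermonde (fun a => z a.rev)).submatrix Fin.rev Fin.rev
      = (Matrix.vandermonde (fun a => z a.rev)).submatrix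
          (Equiv.mk Fin.rev Fin.rev Fin.rev_rev Fin.rev_rev)
          (Equiv.mk Fin.rev Fin.rev Fin.rev_rev Fin.rev_rev) := rfl
  rw [h1, h2, Matrix.det_submatrix_equiv_self, Matrix.det_vandermonde]
  exact prod_Ioi_rev (fun a b => z a - z b)

lemma det_fpow_pow {r : ℕ} (β : F) (y : ℕ → F) (z : Fin r → F) :
    (Matrix.of fun i j : Fin r => fpow β y (z i) (r - 1 - (j : ℕ)) * (1 + β * z i) ^ (j : ℕ)).det
      = ∏ i, ∏ j ∈ Finset.Ioi i, (z i - z j) := by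
  set H : Matrix (Fin r) (Fin r) F :=
    Matrix.of fun i d => z i ^ (r - 1 - (d : ℕ)) * (1 + β * z i) ^ (d : ℕ) with hH
  set c : ℕ → ℕ → F := fun d j =>
    ∑ T ∈ (Finset.range (r - 1 - j)).powerset.filter (fun T => T.card + j = d),
      ∏ t ∈ T, y t with hc
  set C : Matrix (Fin r) (Fin r) F := Matrix.of fun d j => c (d : ℕ) (j : ℕ) with hC
  set V : Matrix (Fin r) (Fin r) F := Matrix.of fun i d => z i ^ (r - 1 - (d : ℕ)) with hV
  set D : Matrix (Fin r) (Fin r) F := Matrix.of fun d' d =>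
    if (d' : ℕ) ≤ (d : ℕ) then
      (Nat.choose (d : ℕ) ((d : ℕ) - (d' : ℕ)) : F) * β ^ ((d : ℕ) - (d' : ℕ)) else 0 with hD
  have hGHC : (Matrix.of fun i j : Fin r =>
      fpow β y (z i) (r - 1 - (j : ℕ)) * (1 + β * z i) ^ (j : ℕ)) = H * C := by
    ext i j
    rw [Matrix.mul_apply]
    simp only [hH, hC, Matrix.of_apply]
    -- expand fpow via prod_add
    have e1 : fpow β y (z i) (r - 1 - (j : ℕ))
        = ∏ t ∈ Finset.range (r - 1 - (j : ℕ)), (y t * (1 + β * z i) + z i) := by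
      unfold fpow; apply Finset.prod_congr rfl; intro t _; ring
    rw [e1, Finset.prod_add]
    -- LHS : ∑ T, (∏ y * (1+βz)) * z^(s−|T|) * (1+βz)^j
    set s : ℕ := r - 1 - (j : ℕ) with hs
    have hjr : (j : ℕ) < r := j.isLt
    have hsum : ∀ T ∈ (Finset.range s).powerset,
        ((∏ t ∈ T, y t * (1 + β * z i)) * ∏ t ∈ Finset.range s \ T, z i) * (1 + β * z i) ^ (j : ℕ)
          = (z i ^ (r - 1 - (T.card + (j : ℕ))) * (1 + β * z i) ^ (T.card + (j : ℕ)))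
              * ∏ t ∈ T, y t := by
      intro T hT
      have hTs : T ⊆ Finset.range s := Finset.mem_powerset.mp hT
      have hTc : T.card ≤ s := by
        have := Finset.card_le_card hTs
        rwa [Finset.card_range] at this
      rw [Finset.prod_mul_distrib, Finset.prod_const, Finset.prod_const,
        Finset.card_sdiff_of_subset hTs, Finset.card_range]
      have : s - T.card = r - 1 - (T.card + (j : ℕ)) := by omega
      rw [this, pow_add]
      ring
    rw [Finset.sum_mul, Finset.sum_congr rfl hsum]
    -- now RHS: fiberwise
    have maps : ∀ T ∈ (Finset.range s).powerset,
        T.card + (j : ℕ) ∈ Finset.range r := by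
      intro T hT
      have := Finset.card_le_card (Finset.mem_powerset.mp hT)
      rw [Finset.card_range] at this
      rw [Finset.mem_range]; omega
    rw [← Finset.sum_fiberwise_of_maps_to maps
      (fun T => (z i ^ (r - 1 - (T.card + (j : ℕ))) * (1 + β * z i) ^ (T.card + (j : ℕ)))
        * ∏ t ∈ T, y t)]
    rw [← Fin.sum_univ_eq_sum_range (fun d =>
      ∑ T ∈ (Finset.range s).powerset.filter (fun T => T.card + (j : ℕ) = d),
        (z i ^ (r - 1 - (T.card + (j : ℕ))) * (1 + β * z i) ^ (T.card + (j : ℕ))) * ∏ t ∈ T, y t)]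
    apply Finset.sum_congr rfl
    intro d _
    simp only [hc]
    rw [Finset.mul_sum]
    apply Finset.sum_congr rfl
    intro T hT
    rw [Finset.mem_filter] at hT
    rw [hT.2]
  have hHVD : H = V * D := by
    ext i d
    rw [Matrix.mul_apply]
    simp only [hH, hV, hD, Matrix.of_apply]
    have e2 : (1 + β * z i) ^ (d : ℕ)
        = ∑ e ∈ Finset.range ((d : ℕ) + 1), (β * z i) ^ e * (Nat.choose (d : ℕ) e : F) := by
      rw [add_comm (1 : F), add_pow]
      simp
    have hdr : (d : ℕ) < r := d.isLt
    have lhs_eq : z i ^ (r - 1 - (d : ℕ)) * (1 + β * z i) ^ (d : ℕ)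
        = ∑ e ∈ Finset.range ((d : ℕ) + 1),
            (Nat.choose (d : ℕ) e : F) * β ^ e * z i ^ ((r - 1 - (d : ℕ)) + e) := by
      rw [e2, Finset.mul_sum]
      apply Finset.sum_congr rfl
      intro e _
      rw [mul_pow, pow_add]
      ring
    rw [lhs_eq]
    have step : ∀ d' : Fin r,
        z i ^ (r - 1 - (d' : ℕ)) * (if (d' : ℕ) ≤ (d : ℕ) then
          (Nat.choose (d : ℕ) ((d : ℕ) - (d' : ℕ)) : F) * β ^ ((d : ℕ) - (d' : ℕ)) else 0)
        = if (d' : ℕ) ≤ (d : ℕ) then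
            z i ^ (r - 1 - (d' : ℕ)) * ((Nat.choose (d : ℕ) ((d : ℕ) - (d' : ℕ)) : F)
              * β ^ ((d : ℕ) - (d' : ℕ))) else 0 := by
      intro d'; split <;> simp
    simp only [step]
    rw [← Finset.sum_filter]
    refine Finset.sum_nbij' (fun e => (⟨(d : ℕ) - e, by omega⟩ : Fin r))
      (fun d' => (d : ℕ) - (d' : ℕ)) ?_ ?_ ?_ ?_ ?_
    · intro e he
      simp only [Finset.mem_filter, Finset.mem_univ, true_and]
      simp
    · intro d' hd'
      simp only [Finset.mem_filter, Finset.mem_univ, true_and] at hd'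
      show (d : ℕ) - (d' : ℕ) ∈ Finset.range ((d : ℕ) + 1)
      rw [Finset.mem_range]; omega
    · intro e he
      rw [Finset.mem_range] at he
      show (d : ℕ) - ((⟨(d : ℕ) - e, by omega⟩ : Fin r) : ℕ) = e
      simp; omega
    · intro d' hd'
      simp only [Finset.mem_filter, Finset.mem_univ, true_and] at hd'
      show (⟨(d : ℕ) - ((d : ℕ) - (d' : ℕ)), by omega⟩ : Fin r) = d'
      apply Fin.ext
      simp; omega
    · intro e he
      rw [Finset.mem_range] at he
      have h1 : ((⟨(d : ℕ) - e, by omega⟩ : Fin r) : ℕ) = (d : ℕ) - e := rfl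
      rw [h1]
      have h2 : (d : ℕ) - ((d : ℕ) - e) = e := by omega
      have h3 : r - 1 - ((d : ℕ) - e) = (r - 1 - (d : ℕ)) + e := by omega
      rw [h2, h3]
      ring
  rw [hGHC, Matrix.det_mul, hHVD, Matrix.det_mul]
  have hdetC : C.det = 1 := by
    have htri : C.BlockTriangular OrderDual.toDual := by
      intro a b hab
      simp only [OrderDual.toDual_lt_toDual] at hab
      simp only [hC, hc, Matrix.of_apply]
      apply Finset.sum_eq_zero
      intro T hT
      rw [Finset.mem_filter] at hT
      exfalso
      have : (a : ℕ) < (b : ℕ) := hab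
      omega
    rw [Matrix.det_of_lowerTriangular C htri]
    apply Finset.prod_eq_one
    intro a _
    simp only [hC, hc, Matrix.of_apply]
    have : (Finset.range (r - 1 - (a : ℕ))).powerset.filter
        (fun T => T.card + (a : ℕ) = (a : ℕ)) = {∅} := by
      ext T
      simp only [Finset.mem_filter, Finset.mem_powerset, Finset.mem_singleton]
      constructor
      · rintro ⟨_, hcard⟩
        have : T.card = 0 := by omega
        exact Finset.card_eq_zero.mp this
      · rintro rfl
        simp
    rw [this]
    simp
  have hdetD : D.det = 1 := by
    have htri : D.BlockTriangular id := by
      intro a b hab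
      simp only [id_eq] at hab
      simp only [hD, Matrix.of_apply]
      rw [if_neg]
      omega
    rw [Matrix.det_of_upperTriangular htri]
    apply Finset.prod_eq_one
    intro a _
    simp [hD]
  rw [hdetC, hdetD, mul_one, mul_one, hV, det_rev_vandermonde]


lemma prod_split {M : Type*} [CommMonoid M] {n r k : ℕ} (h : r + k = n) (f : Fin n → Fin n → M) :
    (∏ a, ∏ b ∈ Finset.Ioi a, f a b) =
      ((∏ i : Fin r, ∏ j ∈ Finset.Ioi i,
          f (finCongr h (Fin.castAdd k i)) (finCongr h (Fin.castAdd k j)))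
        * ∏ i : Fin k, ∏ j ∈ Finset.Ioi i,
            f (finCongr h (Fin.natAdd r i)) (finCongr h (Fin.natAdd r j)))
        * ∏ i : Fin r, ∏ t : Fin k, f (finCongr h (Fin.castAdd k i)) (finCongr h (Fin.natAdd r t)) := by
  subst h
  simp only [finCongr_refl, Equiv.refl_apply]
  have expand : ∀ (N : ℕ) (g : Fin N → Fin N → M) (a : Fin N),
      (∏ b ∈ Finset.Ioi a, g a b) = ∏ b : Fin N, if a < b then g a b else 1 := by
    intro N g a
    rw [← Finset.prod_filter, Finset.filter_lt_eq_Ioi]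
  have expand' : ∀ (N : ℕ) (g : Fin N → Fin N → M),
      (∏ a : Fin N, ∏ b ∈ Finset.Ioi a, g a b)
        = ∏ a : Fin N, ∏ b : Fin N, if a < b then g a b else 1 :=
    fun N g => Finset.prod_congr rfl fun a _ => expand N g a
  rw [expand' (r + k) f]
  have c1 : ∀ i j : Fin r, (Fin.castAdd k i < Fin.castAdd k j) ↔ i < j := by
    intro i j; rw [Fin.lt_def, Fin.lt_def]; simp
  have c2 : ∀ (i : Fin r) (t : Fin k), (Fin.castAdd k i < Fin.natAdd r t) ↔ True := by
    intro i t
    simp only [Fin.lt_def, Fin.coe_castAdd, Fin.coe_natAdd, iff_true]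
    omega
  have c3 : ∀ (t : Fin k) (i : Fin r), (Fin.natAdd r t < Fin.castAdd k i) ↔ False := by
    intro t i
    simp only [Fin.lt_def, Fin.coe_castAdd, Fin.coe_natAdd, iff_false, not_lt]
    omega
  have c4 : ∀ i j : Fin k, (Fin.natAdd r i < Fin.natAdd r j) ↔ i < j := by
    intro i j; rw [Fin.lt_def, Fin.lt_def]; simp
  rw [Fin.prod_univ_add
    (f := fun a : Fin (r + k) => ∏ b : Fin (r + k), if a < b then f a b else 1)]
  have inner : ∀ a : Fin (r + k), (∏ b : Fin (r + k), if a < b then f a b else 1)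
      = (∏ j : Fin r, if a < Fin.castAdd k j then f a (Fin.castAdd k j) else 1)
        * ∏ t : Fin k, if a < Fin.natAdd r t then f a (Fin.natAdd r t) else 1 :=
    fun a => Fin.prod_univ_add (f := fun b : Fin (r + k) => if a < b then f a b else 1)
  simp only [inner]
  simp only [c1, c2, c3, c4, if_true, if_false]
  rw [Finset.prod_mul_distrib, Finset.prod_mul_distrib]
  simp only [Finset.prod_const_one, one_mul]
  rw [← expand' r (fun a b => f (Fin.castAdd k a) (Fin.castAdd k b)),
    ← expand' k (fun a b => f (Fin.natAdd r a) (Fin.natAdd r b))]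
  exact mul_right_comm _ _ _


lemma card_compl_eq {n k r : ℕ} (h : r + k = n) (S : Finset (Fin n)) (hS : S.card = k) :
    Sᶜ.card = r := by
  rw [Finset.card_compl, hS, Fintype.card_fin]; omega

noncomputable def esub {n k : ℕ} (S : Finset (Fin n)) (hS : S.card = k) (t : Fin k) : Fin n :=
  (S.orderIsoOfFin hS t : Fin n)

lemma esub_mem {n k : ℕ} (S : Finset (Fin n)) (hS : S.card = k) (t : Fin k) :
    esub S hS t ∈ S := (S.orderIsoOfFin hS t).2

lemma esub_inj {n k : ℕ} (S : Finset (Fin n)) (hS : S.card = k) :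
    Function.Injective (esub S hS) := fun a b hab =>
  (S.orderIsoOfFin hS).injective (Subtype.coe_injective hab)


lemma prod_esub {M : Type*} [CommMonoid M] {n k : ℕ} (S : Finset (Fin n)) (hS : S.card = k)
    (f : Fin n → M) : (∏ t : Fin k, f (esub S hS t)) = ∏ a ∈ S, f a := by
  rw [← Finset.prod_coe_sort S f]
  exact Equiv.prod_comp (S.orderIsoOfFin hS).toEquiv (fun a => f a)

lemma sum_elim_inj {n r k : ℕ} (h : r + k = n) (S : Finset (Fin n)) (hS : S.card = k) :
    Function.Injective
      (Sum.elim (esub Sᶜ (card_compl_eq h S hS)) (esub S hS)) := by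
  intro u v huv
  rcases u with a | a <;> rcases v with b | b <;>
    simp only [Sum.elim_inl, Sum.elim_inr] at huv
  · exact congrArg Sum.inl (esub_inj _ _ huv)
  · exfalso
    have h1 := esub_mem Sᶜ (card_compl_eq h S hS) a
    have h2 := esub_mem S hS b
    rw [huv, Finset.mem_compl] at h1
    exact h1 h2
  · exfalso
    have h1 := esub_mem Sᶜ (card_compl_eq h S hS) b
    have h2 := esub_mem S hS a
    rw [← huv, Finset.mem_compl] at h1
    exact h1 h2
  · exact congrArg Sum.inr (esub_inj _ _ huv)

noncomputable def rho {n r k : ℕ} (h : r + k = n) (S : Finset (Fin n)) (hS : S.card = k) :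
    Equiv.Perm (Fin n) :=
  Equiv.ofBijective
    (fun a => Sum.elim (esub Sᶜ (card_compl_eq h S hS)) (esub S hS)
      (finSumFinEquiv.symm (finCongr h.symm a)))
    (by
      rw [Finite.injective_iff_bijective.symm]
      exact (sum_elim_inj h S hS).comp
        (finSumFinEquiv.symm.injective.comp (finCongr h.symm).injective))

lemma rho_castAdd {n r k : ℕ} (h : r + k = n) (S : Finset (Fin n)) (hS : S.card = k) (i : Fin r) :
    rho h S hS (finCongr h (Fin.castAdd k i)) = esub Sᶜ (card_compl_eq h S hS) i := by
  show Sum.elim _ _ (finSumFinEquiv.symm (finCongr h.symm (finCongr h (Fin.castAdd k i)))) = _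
  have : finCongr h.symm (finCongr h (Fin.castAdd k i)) = Fin.castAdd k i := by
    apply Fin.ext; simp
  rw [this, finSumFinEquiv_symm_apply_castAdd, Sum.elim_inl]

lemma rho_natAdd {n r k : ℕ} (h : r + k = n) (S : Finset (Fin n)) (hS : S.card = k) (t : Fin k) :
    rho h S hS (finCongr h (Fin.natAdd r t)) = esub S hS t := by
  show Sum.elim _ _ (finSumFinEquiv.symm (finCongr h.symm (finCongr h (Fin.natAdd r t)))) = _
  have : finCongr h.symm (finCongr h (Fin.natAdd r t)) = Fin.natAdd r t := by
    apply Fin.ext; simp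
  rw [this, finSumFinEquiv_symm_apply_natAdd, Sum.elim_inr]

-- block permutation
noncomputable def bperm {r k n : ℕ} (h : r + k = n)
    (p : Equiv.Perm (Fin r) × Equiv.Perm (Fin k)) : Equiv.Perm (Fin n) :=
  (finSumFinEquiv.trans (finCongr h)).permCongr (p.1.sumCongr p.2)

lemma bperm_castAdd {r k n : ℕ} (h : r + k = n)
    (p : Equiv.Perm (Fin r) × Equiv.Perm (Fin k)) (i : Fin r) :
    bperm h p (finCongr h (Fin.castAdd k i)) = finCongr h (Fin.castAdd k (p.1 i)) := by
  rw [bperm, Equiv.permCongr_apply]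
  have h1 : (finSumFinEquiv.trans (finCongr h)).symm (finCongr h (Fin.castAdd k i))
      = Sum.inl i := by
    rw [Equiv.symm_trans_apply]
    have : (finCongr h).symm (finCongr h (Fin.castAdd k i)) = Fin.castAdd k i :=
      Equiv.symm_apply_apply _ _
    rw [this, finSumFinEquiv_symm_apply_castAdd]
  rw [h1]
  simp

lemma bperm_natAdd {r k n : ℕ} (h : r + k = n)
    (p : Equiv.Perm (Fin r) × Equiv.Perm (Fin k)) (t : Fin k) :
    bperm h p (finCongr h (Fin.natAdd r t)) = finCongr h (Fin.natAdd r (p.2 t)) := by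
  rw [bperm, Equiv.permCongr_apply]
  have h1 : (finSumFinEquiv.trans (finCongr h)).symm (finCongr h (Fin.natAdd r t))
      = Sum.inr t := by
    rw [Equiv.symm_trans_apply]
    have : (finCongr h).symm (finCongr h (Fin.natAdd r t)) = Fin.natAdd r t :=
      Equiv.symm_apply_apply _ _
    rw [this, finSumFinEquiv_symm_apply_natAdd]
  rw [h1]
  simp

lemma sign_bperm {r k n : ℕ} (h : r + k = n)
    (p : Equiv.Perm (Fin r) × Equiv.Perm (Fin k)) :
    Equiv.Perm.sign (bperm h p) = Equiv.Perm.sign p.1 * Equiv.Perm.sign p.2 := by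
  rw [bperm, Equiv.Perm.sign_permCongr, Equiv.Perm.sign_sumCongr]

theorem laplace {n r k : ℕ} (h : r + k = n) (M : Matrix (Fin n) (Fin n) F) :
    M.det = ∑ S : {S : Finset (Fin n) // S.card = k},
      ((Equiv.Perm.sign (rho h S.1 S.2) : ℤ) : F)
        * (Matrix.of fun i i' : Fin r =>
            M (esub S.1ᶜ (card_compl_eq h S.1 S.2) i) (finCongr h (Fin.castAdd k i'))).det
        * (Matrix.of fun t t' : Fin k =>
            M (esub S.1 S.2 t) (finCongr h (Fin.natAdd r t'))).det := by
  classical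
  set ca : Fin r → Fin n := fun i => finCongr h (Fin.castAdd k i) with hca
  set na : Fin k → Fin n := fun t => finCongr h (Fin.natAdd r t) with hna
  have hna_inj : Function.Injective na := by
    intro a b hab
    apply Fin.ext
    have := congrArg (fun u : Fin n => (u : ℕ)) hab
    simpa [hna] using this
  have hcane : ∀ (i : Fin r) (t : Fin k), ca i ≠ na t := by
    intro i t heq
    have := congrArg (fun u : Fin n => (u : ℕ)) heq
    simp [hca, hna] at this
    omega
  set g : Equiv.Perm (Fin n) → {S : Finset (Fin n) // S.card = k} := fun σ =>
    ⟨Finset.image (fun t => σ (na t)) Finset.univ, by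
      rw [Finset.card_image_of_injective _ (fun a b hab => hna_inj (σ.injective hab)), Finset.card_univ,
        Fintype.card_fin]⟩ with hg
  rw [Matrix.det_apply,
    ← Finset.sum_fiberwise_of_maps_to (g := g) (t := Finset.univ)
      (fun σ _ => Finset.mem_univ (g σ)) (fun σ => Equiv.Perm.sign σ • ∏ i, M (σ i) i)]
  apply Finset.sum_congr rfl
  intro S _
  have hC := card_compl_eq h S.1 S.2
  set eS : Fin k → Fin n := esub S.1 S.2 with heS
  set eC : Fin r → Fin n := esub S.1ᶜ hC with heC
  set csign : F := ((Equiv.Perm.sign (rho h S.1 S.2) : ℤ) : F) with hcsign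
  set Φ : Equiv.Perm (Fin r) × Equiv.Perm (Fin k) → Equiv.Perm (Fin n) :=
    fun p => (bperm h p).trans (rho h S.1 S.2) with hΦ
  have hΦca : ∀ p i, Φ p (ca i) = eC (p.1 i) := by
    intro p i
    show rho h S.1 S.2 (bperm h p (ca i)) = _
    rw [hca]
    simp only []
    rw [bperm_castAdd, rho_castAdd]
  have hΦna : ∀ p t, Φ p (na t) = eS (p.2 t) := by
    intro p t
    show rho h S.1 S.2 (bperm h p (na t)) = _
    rw [hna]
    simp only []
    rw [bperm_natAdd, rho_natAdd]
  have hsurj : ∀ a : Fin n, ∃ b : Fin (r + k), finCongr h b = a := by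
    intro a
    exact ⟨(finCongr h).symm a, Equiv.apply_symm_apply _ _⟩
  -- the summand function with p
  set gfun : Equiv.Perm (Fin r) × Equiv.Perm (Fin k) → F := fun p =>
    csign * ((Equiv.Perm.sign p.1 : ℤ) : F) * ((Equiv.Perm.sign p.2 : ℤ) : F)
      * ((∏ i, M (eC (p.1 i)) (ca i)) * ∏ t, M (eS (p.2 t)) (na t)) with hgfun
  have step1 : ∀ p, Equiv.Perm.sign (Φ p) • (∏ i, M (Φ p i) i) = gfun p := by
    intro p
    have hsign : Equiv.Perm.sign (Φ p)
        = Equiv.Perm.sign (rho h S.1 S.2) * (Equiv.Perm.sign p.1 * Equiv.Perm.sign p.2) := by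
      have : Φ p = rho h S.1 S.2 * bperm h p := rfl
      rw [this, _root_.map_mul, sign_bperm]
    have hprod : (∏ i, M (Φ p i) i)
        = (∏ i, M (eC (p.1 i)) (ca i)) * ∏ t, M (eS (p.2 t)) (na t) := by
      rw [← Equiv.prod_comp (finCongr h) (fun a => M (Φ p a) a)]
      rw [Fin.prod_univ_add (f := fun b : Fin (r + k) => M (Φ p (finCongr h b)) (finCongr h b))]
      congr 1
      · exact Finset.prod_congr rfl fun i _ => by rw [show finCongr h (Fin.castAdd k i) = ca i from rfl, hΦca]
      · exact Finset.prod_congr rfl fun t _ => by rw [show finCongr h (Fin.natAdd r t) = na t from rfl, hΦna]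
    rw [hsign, hprod, hgfun]
    simp only [Units.smul_def, zsmul_eq_mul]
    push_cast
    ring
  -- RHS equals sum over pairs
  have rhs_eq : csign
        * (Matrix.of fun i i' : Fin r => M (eC i) (ca i')).det
        * (Matrix.of fun t t' : Fin k => M (eS t) (na t')).det
      = ∑ p : Equiv.Perm (Fin r) × Equiv.Perm (Fin k), gfun p := by
    rw [Matrix.det_apply, Matrix.det_apply, Fintype.sum_prod_type]
    simp only [Matrix.of_apply, Units.smul_def, zsmul_eq_mul]
    rw [mul_assoc, Finset.sum_mul_sum, Finset.mul_sum]
    apply Finset.sum_congr rfl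
    intro τ _
    rw [Finset.mul_sum]
    apply Finset.sum_congr rfl
    intro π _
    simp only [hgfun]
    push_cast
    ring
  have hca_inj : Function.Injective ca := by
    intro a b hab
    apply Fin.ext
    have := congrArg (fun u : Fin n => (u : ℕ)) hab
    simpa [hca] using this
  have hmemS : ∀ (σ : Equiv.Perm (Fin n)), g σ = S → ∀ t, σ (na t) ∈ S.1 := by
    intro σ hσ t
    have h2 : (g σ).1 = S.1 := congrArg Subtype.val hσ
    rw [← h2]
    exact Finset.mem_image_of_mem _ (Finset.mem_univ t)
  have hmemC : ∀ (σ : Equiv.Perm (Fin n)), g σ = S → ∀ i, σ (ca i) ∈ S.1ᶜ := by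
    intro σ hσ i
    rw [Finset.mem_compl]
    intro hmem
    have h2 : (g σ).1 = S.1 := congrArg Subtype.val hσ
    rw [← h2] at hmem
    obtain ⟨t, _, ht⟩ := Finset.mem_image.mp hmem
    exact hcane i t (σ.injective ht).symm
  have hmemC' : ∀ σ ∈ Finset.univ.filter (fun σ : Equiv.Perm (Fin n) => g σ = S),
      ∀ i, σ (ca i) ∈ S.1ᶜ := fun σ hσ => hmemC σ (Finset.mem_filter.mp hσ).2
  have hmemS' : ∀ σ ∈ Finset.univ.filter (fun σ : Equiv.Perm (Fin n) => g σ = S),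
      ∀ t, σ (na t) ∈ S.1 := fun σ hσ => hmemS σ (Finset.mem_filter.mp hσ).2
  set Ψ : ∀ σ ∈ Finset.univ.filter (fun σ : Equiv.Perm (Fin n) => g σ = S),
      Equiv.Perm (Fin r) × Equiv.Perm (Fin k) := fun σ hσ =>
    (Equiv.ofBijective (fun i => (S.1ᶜ.orderIsoOfFin hC).symm ⟨σ (ca i), hmemC' σ hσ i⟩)
      (Finite.injective_iff_bijective.mp (fun a b hab =>
        hca_inj (σ.injective (congrArg Subtype.val
          ((S.1ᶜ.orderIsoOfFin hC).symm.injective hab))))),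
     Equiv.ofBijective (fun t => (S.1.orderIsoOfFin S.2).symm ⟨σ (na t), hmemS' σ hσ t⟩)
      (Finite.injective_iff_bijective.mp (fun a b hab =>
        hna_inj (σ.injective (congrArg Subtype.val
          ((S.1.orderIsoOfFin S.2).symm.injective hab)))))) with hΨ
  -- g (Φ p) = S
  have hgΦ : ∀ p, g (Φ p) = S := by
    intro p
    apply Subtype.ext
    apply Finset.ext
    intro a
    constructor
    · intro hmem
      obtain ⟨t, _, ht⟩ := Finset.mem_image.mp hmem
      rw [← ht, hΦna]
      exact esub_mem _ _ _
    · intro ha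
      apply Finset.mem_image.mpr
      refine ⟨p.2.symm ((S.1.orderIsoOfFin S.2).symm ⟨a, ha⟩), Finset.mem_univ _, ?_⟩
      rw [hΦna, Equiv.apply_symm_apply]
      show ((S.1.orderIsoOfFin S.2) ((S.1.orderIsoOfFin S.2).symm ⟨a, ha⟩) : Fin n) = a
      rw [OrderIso.apply_symm_apply]
  have hΦmem : ∀ p, Φ p ∈ Finset.univ.filter (fun σ : Equiv.Perm (Fin n) => g σ = S) :=
    fun p => Finset.mem_filter.mpr ⟨Finset.mem_univ _, hgΦ p⟩
  have left_inv : ∀ σ (hσ : σ ∈ Finset.univ.filter (fun σ : Equiv.Perm (Fin n) => g σ = S)),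
      Φ (Ψ σ hσ) = σ := by
    intro σ hσ
    apply Equiv.ext
    intro a
    obtain ⟨b, rfl⟩ := hsurj a
    refine Fin.addCases (motive := fun b => Φ (Ψ σ hσ) ((finCongr h) b) = σ ((finCongr h) b))
      (fun i => ?_) (fun t => ?_) b
    · show Φ (Ψ σ hσ) (ca i) = σ (ca i)
      rw [hΦca]
      show ((S.1ᶜ.orderIsoOfFin hC)
        ((S.1ᶜ.orderIsoOfFin hC).symm ⟨σ (ca i), hmemC' σ hσ i⟩) : Fin n) = σ (ca i)
      rw [OrderIso.apply_symm_apply]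
    · show Φ (Ψ σ hσ) (na t) = σ (na t)
      rw [hΦna]
      show ((S.1.orderIsoOfFin S.2)
        ((S.1.orderIsoOfFin S.2).symm ⟨σ (na t), hmemS' σ hσ t⟩) : Fin n) = σ (na t)
      rw [OrderIso.apply_symm_apply]
  have right_inv : ∀ p (hp : Φ p ∈ Finset.univ.filter
      (fun σ : Equiv.Perm (Fin n) => g σ = S)), Ψ (Φ p) hp = p := by
    intro p hp
    have c1 : (Ψ (Φ p) hp).1 = p.1 := by
      apply Equiv.ext
      intro i
      show (S.1ᶜ.orderIsoOfFin hC).symm ⟨Φ p (ca i), hmemC' (Φ p) hp i⟩ = p.1 i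
      have e1 : (⟨Φ p (ca i), hmemC' (Φ p) hp i⟩ : {x // x ∈ S.1ᶜ})
          = (S.1ᶜ.orderIsoOfFin hC) (p.1 i) := by
        apply Subtype.ext
        show Φ p (ca i) = ((S.1ᶜ.orderIsoOfFin hC) (p.1 i) : Fin n)
        rw [hΦca]
        rfl
      rw [e1, OrderIso.symm_apply_apply]
    have c2 : (Ψ (Φ p) hp).2 = p.2 := by
      apply Equiv.ext
      intro t
      show (S.1.orderIsoOfFin S.2).symm ⟨Φ p (na t), hmemS' (Φ p) hp t⟩ = p.2 t
      have e1 : (⟨Φ p (na t), hmemS' (Φ p) hp t⟩ : {x // x ∈ S.1})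
          = (S.1.orderIsoOfFin S.2) (p.2 t) := by
        apply Subtype.ext
        show Φ p (na t) = ((S.1.orderIsoOfFin S.2) (p.2 t) : Fin n)
        rw [hΦna]
        rfl
      rw [e1, OrderIso.symm_apply_apply]
    exact Prod.ext c1 c2
  have lhs_eq : (∑ σ ∈ Finset.univ.filter (fun σ : Equiv.Perm (Fin n) => g σ = S),
      Equiv.Perm.sign σ • ∏ i, M (σ i) i)
      = ∑ p : Equiv.Perm (Fin r) × Equiv.Perm (Fin k), gfun p := by
    refine Finset.sum_bij' Ψ (fun p _ => Φ p) (fun σ hσ => Finset.mem_univ _)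
      (fun p _ => hΦmem p) left_inv (fun p _ => right_inv p (hΦmem p)) ?_
    intro σ hσ
    conv_lhs => rw [← left_inv σ hσ]
    exact step1 (Ψ σ hσ)
  rw [lhs_eq, ← rhs_eq]

end Aux

theorem main_aux {F : Type*} [Field F] (β : F) (y : ℕ → F) (n k m : ℕ)
    (hkn : k ≤ n) (hkm : k ≤ m)
    (x : Fin n → F) (hx : Function.Injective x) (lam : Fin k → ℕ)
    (mu : Fin n → ℕ)
    (hmu1 : ∀ j : Fin n, (j : ℕ) < n - k → mu j = m - k)
    (hmu2 : ∀ (j : Fin n) (t : Fin k), (j : ℕ) = (n - k) + (t : ℕ) → mu j = lam t) :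
    Groth β y mu x = ∑ S : {S : Finset (Fin n) // S.card = k},
      Groth β y lam (fun i : Fin k => x (esub S.1 S.2 i))
        * ((∏ i ∈ S.1, (1 + β * x i) ^ (n - k)) * (∏ j ∈ S.1ᶜ, fpow β y (x j) m)
          / ∏ i ∈ S.1, ∏ j ∈ S.1ᶜ, (x j - x i)) := by
  have h : (n - k) + k = n := by omega
  rw [Groth_eq β y mu x,
    laplace h (Matrix.of fun i j : Fin n =>
      fpow β y (x i) (mu j + (n - 1 - (j : ℕ))) * (1 + β * x i) ^ (j : ℕ)),
    Finset.sum_div]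
  apply Finset.sum_congr rfl
  intro S _
  -- B block
  have hBmat : (Matrix.of fun i i' : Fin (n-k) =>
      (Matrix.of fun i j : Fin n =>
        fpow β y (x i) (mu j + (n - 1 - (j : ℕ))) * (1 + β * x i) ^ (j : ℕ))
        (esub S.1ᶜ (card_compl_eq h S.1 S.2) i) (finCongr h (Fin.castAdd k i'))) =
      Matrix.of (fun i i' : Fin (n-k) =>
        (fun i : Fin (n-k) => fpow β y (x (esub S.1ᶜ (card_compl_eq h S.1 S.2) i)) m) i *
        (Matrix.of fun i i' : Fin (n-k) =>
          fpow β (fun t => y (m + t)) (x (esub S.1ᶜ (card_compl_eq h S.1 S.2) i))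
              ((n-k) - 1 - (i' : ℕ))
            * (1 + β * x (esub S.1ᶜ (card_compl_eq h S.1 S.2) i)) ^ (i' : ℕ)) i i') := by
    ext i i'
    simp only [Matrix.of_apply]
    have hval : ((finCongr h (Fin.castAdd k i') : Fin n) : ℕ) = (i' : ℕ) := rfl
    rw [hmu1 _ (by rw [hval]; exact i'.isLt), hval]
    have hexp : (m - k) + (n - 1 - (i' : ℕ)) = m + ((n-k) - 1 - (i' : ℕ)) := by
      have := i'.isLt; omega
    rw [hexp, fpow_add]
    ring
  have hdetB : (Matrix.of fun i i' : Fin (n-k) =>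
      (Matrix.of fun i j : Fin n =>
        fpow β y (x i) (mu j + (n - 1 - (j : ℕ))) * (1 + β * x i) ^ (j : ℕ))
        (esub S.1ᶜ (card_compl_eq h S.1 S.2) i) (finCongr h (Fin.castAdd k i'))).det
      = (∏ j ∈ S.1ᶜ, fpow β y (x j) m)
        * ∏ i : Fin (n-k), ∏ j ∈ Finset.Ioi i,
            (x (esub S.1ᶜ (card_compl_eq h S.1 S.2) i)
              - x (esub S.1ᶜ (card_compl_eq h S.1 S.2) j)) := by
    rw [hBmat, Matrix.det_mul_column, det_fpow_pow]
    congr 1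
    exact prod_esub S.1ᶜ (card_compl_eq h S.1 S.2) (fun a => fpow β y (x a) m)
  -- A block
  have hAmat : (Matrix.of fun t t' : Fin k =>
      (Matrix.of fun i j : Fin n =>
        fpow β y (x i) (mu j + (n - 1 - (j : ℕ))) * (1 + β * x i) ^ (j : ℕ))
        (esub S.1 S.2 t) (finCongr h (Fin.natAdd (n-k) t'))) =
      Matrix.of (fun t t' : Fin k =>
        (fun t : Fin k => (1 + β * x (esub S.1 S.2 t)) ^ (n-k)) t *
        (Matrix.of fun t t' : Fin k =>
          fpow β y (x (esub S.1 S.2 t)) (lam t' + (k - 1 - (t' : ℕ)))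
            * (1 + β * x (esub S.1 S.2 t)) ^ (t' : ℕ)) t t') := by
    ext t t'
    simp only [Matrix.of_apply]
    have hval : ((finCongr h (Fin.natAdd (n-k) t') : Fin n) : ℕ) = (n-k) + (t' : ℕ) := rfl
    rw [hmu2 _ t' hval, hval]
    have hexp : n - 1 - ((n-k) + (t' : ℕ)) = k - 1 - (t' : ℕ) := by
      have := t'.isLt; omega
    rw [hexp, pow_add]
    ring
  have hWS_ne : (∏ i : Fin k, ∏ j ∈ Finset.Ioi i,
      (x (esub S.1 S.2 i) - x (esub S.1 S.2 j))) ≠ 0 := by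
    apply Finset.prod_ne_zero_iff.mpr
    intro i _
    apply Finset.prod_ne_zero_iff.mpr
    intro j hj
    apply sub_ne_zero_of_ne
    intro heq
    exact (Finset.mem_Ioi.mp hj).ne' ((esub_inj S.1 S.2 (hx heq)).symm)
  have hdetG : Groth β y lam (fun i : Fin k => x (esub S.1 S.2 i))
      * (∏ i : Fin k, ∏ j ∈ Finset.Ioi i, (x (esub S.1 S.2 i) - x (esub S.1 S.2 j)))
      = (Matrix.of fun t t' : Fin k =>
          fpow β y (x (esub S.1 S.2 t)) (lam t' + (k - 1 - (t' : ℕ)))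
            * (1 + β * x (esub S.1 S.2 t)) ^ (t' : ℕ)).det := by
    rw [Groth_eq β y lam (fun i : Fin k => x (esub S.1 S.2 i))]
    exact div_mul_cancel₀ _ hWS_ne
  have hdetA : (Matrix.of fun t t' : Fin k =>
      (Matrix.of fun i j : Fin n =>
        fpow β y (x i) (mu j + (n - 1 - (j : ℕ))) * (1 + β * x i) ^ (j : ℕ))
        (esub S.1 S.2 t) (finCongr h (Fin.natAdd (n-k) t'))).det
      = (∏ i ∈ S.1, (1 + β * x i) ^ (n - k))
        * (Groth β y lam (fun i : Fin k => x (esub S.1 S.2 i))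
          * ∏ i : Fin k, ∏ j ∈ Finset.Ioi i, (x (esub S.1 S.2 i) - x (esub S.1 S.2 j))) := by
    rw [hAmat, Matrix.det_mul_column, hdetG]
    congr 1
    exact prod_esub S.1 S.2 (fun a => (1 + β * x a) ^ (n - k))
  -- sign and Vandermonde bookkeeping
  have hperm : (∏ i : Fin n, ∏ j ∈ Finset.Ioi i, (x (rho h S.1 S.2 i) - x (rho h S.1 S.2 j)))
      = ((Equiv.Perm.sign (rho h S.1 S.2) : ℤ) : F)
        * ∏ i : Fin n, ∏ j ∈ Finset.Ioi i, (x i - x j) := by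
    have h1 : ((Matrix.of fun i j : Fin n => x i ^ (n - 1 - (j : ℕ))).submatrix
        (rho h S.1 S.2) id).det
        = (Equiv.Perm.sign (rho h S.1 S.2) : ℤ)
          * (Matrix.of fun i j : Fin n => x i ^ (n - 1 - (j : ℕ))).det := by
      exact_mod_cast Matrix.det_permute (rho h S.1 S.2) _
    have h2 : ((Matrix.of fun i j : Fin n => x i ^ (n - 1 - (j : ℕ))).submatrix
        (rho h S.1 S.2) id)
        = Matrix.of fun i j : Fin n => x (rho h S.1 S.2 i) ^ (n - 1 - (j : ℕ)) := rfl
    rw [h2] at h1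
    have h3 := det_rev_vandermonde (fun i => x (rho h S.1 S.2 i))
    have h4 := det_rev_vandermonde x
    rw [h3, h4] at h1
    exact_mod_cast h1
  have hsplit := prod_split h (fun a b => x (rho h S.1 S.2 a) - x (rho h S.1 S.2 b))
  simp only [rho_castAdd, rho_natAdd] at hsplit
  -- mixed product conversion
  have hMx : (∏ i : Fin (n-k), ∏ t : Fin k,
      (x (esub S.1ᶜ (card_compl_eq h S.1 S.2) i) - x (esub S.1 S.2 t)))
      = ∏ i ∈ S.1, ∏ j ∈ S.1ᶜ, (x j - x i) := by
    rw [prod_esub S.1ᶜ (card_compl_eq h S.1 S.2)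
      (fun a => ∏ t : Fin k, (x a - x (esub S.1 S.2 t)))]
    rw [Finset.prod_congr rfl (fun a _ => prod_esub S.1 S.2 (fun b => x a - x b))]
    exact Finset.prod_comm
  rw [hMx] at hsplit
  rw [hperm] at hsplit
  -- final algebra
  set csign : F := ((Equiv.Perm.sign (rho h S.1 S.2) : ℤ) : F) with hcsign
  have hcs : csign * csign = 1 := by
    rw [hcsign]
    have h5 : (Equiv.Perm.sign (rho h S.1 S.2)) * (Equiv.Perm.sign (rho h S.1 S.2)) = 1 :=
      Int.units_mul_self _
    calc ((Equiv.Perm.sign (rho h S.1 S.2) : ℤ) : F)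
          * ((Equiv.Perm.sign (rho h S.1 S.2) : ℤ) : F)
        = (((Equiv.Perm.sign (rho h S.1 S.2) * Equiv.Perm.sign (rho h S.1 S.2) : ℤˣ) : ℤ) : F) := by
          push_cast; ring
      _ = 1 := by rw [h5]; simp
  have hcs_ne : csign ≠ 0 := left_ne_zero_of_mul_eq_one hcs
  have hWC_ne : (∏ i : Fin (n-k), ∏ j ∈ Finset.Ioi i,
      (x (esub S.1ᶜ (card_compl_eq h S.1 S.2) i)
        - x (esub S.1ᶜ (card_compl_eq h S.1 S.2) j))) ≠ 0 := by
    apply Finset.prod_ne_zero_iff.mpr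
    intro i _
    apply Finset.prod_ne_zero_iff.mpr
    intro j hj
    apply sub_ne_zero_of_ne
    intro heq
    exact (Finset.mem_Ioi.mp hj).ne' ((esub_inj S.1ᶜ (card_compl_eq h S.1 S.2) (hx heq)).symm)
  have hWx : (∏ i : Fin n, ∏ j ∈ Finset.Ioi i, (x i - x j))
      = csign * (((∏ i : Fin (n-k), ∏ j ∈ Finset.Ioi i,
          (x (esub S.1ᶜ (card_compl_eq h S.1 S.2) i)
            - x (esub S.1ᶜ (card_compl_eq h S.1 S.2) j)))
        * (∏ i : Fin k, ∏ j ∈ Finset.Ioi i, (x (esub S.1 S.2 i) - x (esub S.1 S.2 j))))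
        * ∏ i ∈ S.1, ∏ j ∈ S.1ᶜ, (x j - x i)) := by
    rw [← hsplit]
    rw [show csign * (csign * ∏ i : Fin n, ∏ j ∈ Finset.Ioi i, (x i - x j))
      = (csign * csign) * ∏ i : Fin n, ∏ j ∈ Finset.Ioi i, (x i - x j) from by ring,
      hcs, one_mul]
  rw [hdetB, hdetA, hWx]
  rw [show csign * ((∏ j ∈ S.1ᶜ, fpow β y (x j) m)
      * ∏ i : Fin (n-k), ∏ j ∈ Finset.Ioi i,
          (x (esub S.1ᶜ (card_compl_eq h S.1 S.2) i)
            - x (esub S.1ᶜ (card_compl_eq h S.1 S.2) j)))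
      * ((∏ i ∈ S.1, (1 + β * x i) ^ (n - k))
        * (Groth β y lam (fun i : Fin k => x (esub S.1 S.2 i))
          * ∏ i : Fin k, ∏ j ∈ Finset.Ioi i, (x (esub S.1 S.2 i) - x (esub S.1 S.2 j))))
      = csign * (((∏ i : Fin (n-k), ∏ j ∈ Finset.Ioi i,
          (x (esub S.1ᶜ (card_compl_eq h S.1 S.2) i)
            - x (esub S.1ᶜ (card_compl_eq h S.1 S.2) j)))
        * (∏ i : Fin k, ∏ j ∈ Finset.Ioi i, (x (esub S.1 S.2 i) - x (esub S.1 S.2 j))))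
        * (Groth β y lam (fun i : Fin k => x (esub S.1 S.2 i))
          * ((∏ i ∈ S.1, (1 + β * x i) ^ (n - k)) * ∏ j ∈ S.1ᶜ, fpow β y (x j) m))) from by ring]
  rw [mul_div_mul_left _ _ hcs_ne, mul_div_mul_left _ _ (mul_ne_zero hWC_ne hWS_ne),
    mul_div_assoc]

/-- Fehér–Némethi–Rimányi type identity for factorial Grothendieck polynomials:
with `μ = (m−k,…,m−k,λ_1,…,λ_k)` (the value `m−k` repeated `n−k` times),
`G_μ(x|y) = Σ_S G_λ(x_S|y) ∏_{i∈S}(1+βx_i)^{n−k} ∏_{j∈S̄}[x_j|y]^m / ∏_{i∈S}∏_{j∈S̄}(x_j−x_i)`. -/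
theorem stmt5 {F : Type*} [Field F] (β : F) (y : ℕ → F) (n k m : ℕ)
    (hkn : k ≤ n) (hkm : k ≤ m)
    (x : Fin n → F) (hx : Function.Injective x)
    (lam : Fin k → ℕ) (hlam : Antitone lam) (hlam1 : ∀ i, lam i ≤ m - k) :
    Groth β y (fun i : Fin n =>
        if h : (i : ℕ) < n - k then m - k
        else lam ⟨(i : ℕ) - (n - k), by have := i.isLt; omega⟩) x
      = ∑ S : {S : Finset (Fin n) // S.card = k},
          Groth β y lam (fun i : Fin k => x ((S.1.orderIsoOfFin S.2 i : Fin n)))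
            * ((∏ i ∈ S.1, (1 + β * x i) ^ (n - k)) * (∏ j ∈ S.1ᶜ, fpow β y (x j) m)
              / ∏ i ∈ S.1, ∏ j ∈ S.1ᶜ, (x j - x i)) := by
  exact main_aux β y n k m hkn hkm x hx lam _
    (fun j hj => dif_pos hj)
    (fun j t hjt => by
      rw [dif_neg (by omega)]
      congr 1
      apply Fin.ext
      simp
      omega)
end

section
/- For all integers 0 ≤ k ≤ n, every field F, every β ∈ F, all y_1, y_2, … ∈ F and all pairwise distinct x_1, …, x_n ∈ F, one has 1 = Σ_{S ∈ binom([n],k)} (∏_{i∈S}(1+βx_i)^{n−k} · ∏_{j∈S̄}[x_j|y]^k) / (∏_{i∈S}∏_{j∈S̄}(x_j − x_i)), where S̄ = [n] ∖ S. -/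
open Finset Polynomial

section Good

variable {F : Type*} [Field F] [DecidableEq F]

/-- The Good-type sum over `k`-subsets of a finset of field elements. -/
def G (β : F) (y : ℕ → F) (X : Finset F) (k : ℕ) : F :=
  ∑ T ∈ X.powersetCard k,
    (∏ i ∈ T, (1 + β * i) ^ (X.card - k)) * (∏ j ∈ X \ T, fpow β y j k)
      / ∏ i ∈ T, ∏ j ∈ X \ T, (j - i)

lemma prod_sub_comm (s : Finset F) (a : F) :
    ∏ j ∈ s, (a - j) = (-1) ^ s.card * ∏ j ∈ s, (j - a) := by
  rw [← Finset.prod_const, ← Finset.prod_mul_distrib]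
  exact Finset.prod_congr rfl fun j _ => by ring

lemma prod_sub_ne_zero {s : Finset F} {a : F} (h : a ∉ s) : (∏ j ∈ s, (j - a)) ≠ 0 := by
  rw [Finset.prod_ne_zero_iff]
  exact fun j hj => sub_ne_zero.mpr fun hja => h (hja ▸ hj)

lemma prod_sub_ne_zero' {s : Finset F} {a : F} (h : a ∉ s) : (∏ j ∈ s, (a - j)) ≠ 0 := by
  rw [Finset.prod_ne_zero_iff]
  exact fun j hj => sub_ne_zero.mpr fun hja => h (hja ▸ hj)

lemma dd_ne_zero {Z T : Finset F} :
    (∏ i ∈ T, ∏ j ∈ Z \ T, (j - i)) ≠ 0 := by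
  rw [Finset.prod_ne_zero_iff]
  intro i hi
  exact prod_sub_ne_zero fun h => (Finset.mem_sdiff.mp h).2 hi

/-- The polynomial `Q` whose evaluations give `fpow`. -/
noncomputable def Qp (β : F) (y : ℕ → F) (k : ℕ) : Polynomial F :=
  ∏ t ∈ Finset.range k, (Polynomial.C (1 + β * y t) * Polynomial.X + Polynomial.C (y t))

lemma Qp_eval (β : F) (y : ℕ → F) (k : ℕ) (x : F) : (Qp β y k).eval x = fpow β y x k := by
  simp only [Qp, fpow, Polynomial.eval_prod, Polynomial.eval_add, Polynomial.eval_mul,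
    Polynomial.eval_C, Polynomial.eval_X]
  exact Finset.prod_congr rfl fun t _ => by ring

lemma Qp_natDegree_le (β : F) (y : ℕ → F) (k : ℕ) : (Qp β y k).natDegree ≤ k := by
  refine le_trans (Polynomial.natDegree_prod_le _ _) (le_trans
    (Finset.sum_le_sum fun t _ => Polynomial.natDegree_linear_le) (by simp))

lemma fpow_neg_inv (β : F) (y : ℕ → F) (k : ℕ) (hβ : β ≠ 0) :
    fpow β y (-β⁻¹) k = (-β⁻¹) ^ k := by
  unfold fpow
  have h : ∀ t, -β⁻¹ + y t + β * -β⁻¹ * y t = -β⁻¹ := by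
    intro t
    have hββ : β * β⁻¹ = 1 := mul_inv_cancel₀ hβ
    calc -β⁻¹ + y t + β * -β⁻¹ * y t = -β⁻¹ + y t - (β * β⁻¹) * y t := by ring
      _ = -β⁻¹ := by rw [hββ]; ring
  calc ∏ t ∈ Finset.range k, (-β⁻¹ + y t + β * -β⁻¹ * y t)
      = ∏ _t ∈ Finset.range k, (-β⁻¹) := Finset.prod_congr rfl fun t _ => h t
    _ = (-β⁻¹) ^ k := by rw [Finset.prod_const, Finset.card_range]

/-- The numerical coefficient attached to a subset `T`. -/
def CT (β : F) (y : ℕ → F) (X' : Finset F) (e k : ℕ) (T : Finset F) : F :=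
  (∏ i ∈ T, (1 + β * i) ^ e) * (∏ j ∈ X' \ T, fpow β y j k)
    / ∏ i ∈ T, ∏ j ∈ X' \ T, (j - i)

/-- The auxiliary polynomial. -/
noncomputable def Phi (β : F) (y : ℕ → F) (X' : Finset F) (e k k' : ℕ) : Polynomial F :=
  (∑ T ∈ X'.powersetCard k, Polynomial.C (CT β y X' e k T)
      * (Qp β y k * ∏ j ∈ X' \ T, (Polynomial.X - Polynomial.C j)))
    + ∑ T ∈ X'.powersetCard k', Polynomial.C ((-1) ^ e * CT β y X' e k T)
        * ((1 + Polynomial.C β * Polynomial.X) ^ e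
            * ∏ i ∈ T, (Polynomial.X - Polynomial.C i))

lemma keyE (β : F) (y : ℕ → F) (X' : Finset F) (k' : ℕ) (hk : k' + 1 ≤ X'.card)
    {w : F} (hw : w ∉ X') :
    G β y (insert w X') (k' + 1) * ∏ j ∈ X', (w - j)
      = (Phi β y X' (X'.card - k') (k' + 1) k').eval w := by
  have hcard : (insert w X').card = X'.card + 1 := Finset.card_insert_of_notMem hw
  have hdisj : Disjoint (X'.powersetCard (k' + 1))
      ((X'.powersetCard k').image (insert w)) := by
    rw [Finset.disjoint_left]
    intro T hT hT2
    obtain ⟨A, _hA, rfl⟩ := Finset.mem_image.mp hT2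
    exact hw ((Finset.mem_powersetCard.mp hT).1 (Finset.mem_insert_self w A))
  have hinj : ∀ A ∈ X'.powersetCard k', ∀ B ∈ X'.powersetCard k',
      insert w A = insert w B → A = B := by
    intro A hA B hB h
    have hwA : w ∉ A := fun hc => hw ((Finset.mem_powersetCard.mp hA).1 hc)
    have hwB : w ∉ B := fun hc => hw ((Finset.mem_powersetCard.mp hB).1 hc)
    rw [← Finset.erase_insert hwA, ← Finset.erase_insert hwB, h]
  simp only [G, Phi]
  rw [hcard, show X'.card + 1 - (k' + 1) = X'.card - k' from by omega,
    Finset.powersetCard_succ_insert hw, Finset.sum_union hdisj, Finset.sum_image hinj,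
    add_mul, Finset.sum_mul, Finset.sum_mul, Polynomial.eval_add,
    Polynomial.eval_finset_sum, Polynomial.eval_finset_sum]
  congr 1
  · refine Finset.sum_congr rfl fun T hT => ?_
    obtain ⟨hTsub, hTcard⟩ := Finset.mem_powersetCard.mp hT
    have hwT : w ∉ T := fun h => hw (hTsub h)
    have hwsd : w ∉ X' \ T := fun h => hw (Finset.mem_sdiff.mp h).1
    have hsd : insert w X' \ T = insert w (X' \ T) :=
      Finset.insert_sdiff_of_notMem _ hwT
    rw [hsd, Finset.prod_insert hwsd]
    have hden : ∏ i ∈ T, ∏ j ∈ insert w (X' \ T), (j - i)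
        = (∏ i ∈ T, (w - i)) * ∏ i ∈ T, ∏ j ∈ X' \ T, (j - i) := by
      rw [← Finset.prod_mul_distrib]
      exact Finset.prod_congr rfl fun i _ => Finset.prod_insert hwsd
    rw [hden]
    have hsplit : (∏ j ∈ X' \ T, (w - j)) * ∏ j ∈ T, (w - j) = ∏ j ∈ X', (w - j) :=
      Finset.prod_sdiff hTsub
    rw [Polynomial.eval_mul, Polynomial.eval_C, Polynomial.eval_mul, Qp_eval,
      Polynomial.eval_prod]
    simp only [Polynomial.eval_sub, Polynomial.eval_X, Polynomial.eval_C]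
    rw [CT, ← hsplit]
    have h1 : (∏ i ∈ T, (w - i)) ≠ 0 := prod_sub_ne_zero' hwT
    have h2 : (∏ i ∈ T, ∏ j ∈ X' \ T, (j - i)) ≠ 0 := dd_ne_zero
    field_simp
  · refine Finset.sum_congr rfl fun A hA => ?_
    obtain ⟨hAsub, hAcard⟩ := Finset.mem_powersetCard.mp hA
    have hwA : w ∉ A := fun h => hw (hAsub h)
    have hsd : insert w X' \ insert w A = X' \ A := by
      ext b
      simp only [Finset.mem_sdiff, Finset.mem_insert, not_or]
      constructor
      · rintro ⟨hb1 | hb1, hb2, hb3⟩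
        · exact absurd hb1 hb2
        · exact ⟨hb1, hb3⟩
      · rintro ⟨hb1, hb2⟩
        exact ⟨Or.inr hb1, fun h => hw (h ▸ hb1), hb2⟩
    rw [hsd, Finset.prod_insert hwA]
    have hden : ∏ i ∈ insert w A, ∏ j ∈ X' \ A, (j - i)
        = (∏ j ∈ X' \ A, (j - w)) * ∏ i ∈ A, ∏ j ∈ X' \ A, (j - i) :=
      Finset.prod_insert hwA
    rw [hden]
    have hWsplit : (∏ j ∈ X' \ A, (w - j)) * ∏ j ∈ A, (w - j) = ∏ j ∈ X', (w - j) :=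
      Finset.prod_sdiff hAsub
    have hcards : (X' \ A).card = X'.card - k' := by
      rw [Finset.card_sdiff_of_subset hAsub, hAcard]
    have hsign : ∏ j ∈ X' \ A, (w - j) = (-1) ^ (X'.card - k') * ∏ j ∈ X' \ A, (j - w) := by
      rw [prod_sub_comm, hcards]
    rw [Polynomial.eval_mul, Polynomial.eval_C, Polynomial.eval_mul, Polynomial.eval_pow,
      Polynomial.eval_add, Polynomial.eval_one, Polynomial.eval_mul, Polynomial.eval_C,
      Polynomial.eval_X, Polynomial.eval_prod]
    simp only [Polynomial.eval_sub, Polynomial.eval_X, Polynomial.eval_C]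
    rw [CT, ← hWsplit, hsign]
    have h1 : (∏ j ∈ X' \ A, (j - w)) ≠ 0 :=
      prod_sub_ne_zero fun h => hw (Finset.mem_sdiff.mp h).1
    have h2 : (∏ i ∈ A, ∏ j ∈ X' \ A, (j - i)) ≠ 0 := dd_ne_zero
    field_simp

lemma keyZ (β : F) (y : ℕ → F) (X' : Finset F) (k' : ℕ) (hk : k' + 1 ≤ X'.card)
    {a : F} (ha : a ∈ X') :
    (Phi β y X' (X'.card - k') (k' + 1) k').eval a = 0 := by
  rw [Phi, Polynomial.eval_add, Polynomial.eval_finset_sum, Polynomial.eval_finset_sum]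
  have h1 : ∑ T ∈ X'.powersetCard (k' + 1),
        (Polynomial.C (CT β y X' (X'.card - k') (k' + 1) T)
          * (Qp β y (k' + 1) * ∏ j ∈ X' \ T, (Polynomial.X - Polynomial.C j))).eval a
      = ∑ T ∈ (X'.powersetCard (k' + 1)).filter (fun T => a ∈ T),
        (Polynomial.C (CT β y X' (X'.card - k') (k' + 1) T)
          * (Qp β y (k' + 1) * ∏ j ∈ X' \ T, (Polynomial.X - Polynomial.C j))).eval a := by
    refine (Finset.sum_filter_of_ne ?_).symm
    intro T _hT hne
    by_contra haT
    apply hne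
    have hz : ((∏ j ∈ X' \ T, (Polynomial.X - Polynomial.C j)) : Polynomial F).eval a = 0 := by
      rw [Polynomial.eval_prod]
      exact Finset.prod_eq_zero (Finset.mem_sdiff.mpr ⟨ha, haT⟩)
        (by simp)
    rw [Polynomial.eval_mul, Polynomial.eval_mul, hz]
    ring
  have h2 : ∑ T ∈ X'.powersetCard k',
        (Polynomial.C ((-1) ^ (X'.card - k') * CT β y X' (X'.card - k') (k' + 1) T)
          * ((1 + Polynomial.C β * Polynomial.X) ^ (X'.card - k')
              * ∏ i ∈ T, (Polynomial.X - Polynomial.C i))).eval a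
      = ∑ T ∈ (X'.powersetCard k').filter (fun T => a ∉ T),
        (Polynomial.C ((-1) ^ (X'.card - k') * CT β y X' (X'.card - k') (k' + 1) T)
          * ((1 + Polynomial.C β * Polynomial.X) ^ (X'.card - k')
              * ∏ i ∈ T, (Polynomial.X - Polynomial.C i))).eval a := by
    refine (Finset.sum_filter_of_ne ?_).symm
    intro T _hT hne
    by_contra haT
    apply hne
    have hz : ((∏ i ∈ T, (Polynomial.X - Polynomial.C i)) : Polynomial F).eval a = 0 := by
      rw [Polynomial.eval_prod]
      exact Finset.prod_eq_zero haT (by simp)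
    rw [Polynomial.eval_mul, Polynomial.eval_mul, hz]
    ring
  rw [h1, h2]
  have h3 : ∑ T ∈ (X'.powersetCard (k' + 1)).filter (fun T => a ∈ T),
        (Polynomial.C (CT β y X' (X'.card - k') (k' + 1) T)
          * (Qp β y (k' + 1) * ∏ j ∈ X' \ T, (Polynomial.X - Polynomial.C j))).eval a
      = ∑ T ∈ (X'.powersetCard k').filter (fun T => a ∉ T),
        -((Polynomial.C ((-1) ^ (X'.card - k') * CT β y X' (X'.card - k') (k' + 1) T)
          * ((1 + Polynomial.C β * Polynomial.X) ^ (X'.card - k')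
              * ∏ i ∈ T, (Polynomial.X - Polynomial.C i))).eval a) := by
    refine Finset.sum_nbij' (fun T => T.erase a) (fun A => insert a A) ?_ ?_ ?_ ?_ ?_
    · intro T hT
      obtain ⟨hTm, haT⟩ := Finset.mem_filter.mp hT
      obtain ⟨hTsub, hTcard⟩ := Finset.mem_powersetCard.mp hTm
      refine Finset.mem_filter.mpr ⟨Finset.mem_powersetCard.mpr
        ⟨(Finset.erase_subset a T).trans hTsub, ?_⟩, Finset.notMem_erase a T⟩
      rw [Finset.card_erase_of_mem haT, hTcard]
      omega
    · intro A hA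
      obtain ⟨hAm, haA⟩ := Finset.mem_filter.mp hA
      obtain ⟨hAsub, hAcard⟩ := Finset.mem_powersetCard.mp hAm
      refine Finset.mem_filter.mpr ⟨Finset.mem_powersetCard.mpr
        ⟨Finset.insert_subset ha hAsub, ?_⟩, Finset.mem_insert_self a A⟩
      rw [Finset.card_insert_of_notMem haA, hAcard]
    · intro T hT
      exact Finset.insert_erase (Finset.mem_filter.mp hT).2
    · intro A hA
      exact Finset.erase_insert (Finset.mem_filter.mp hA).2
    · intro T hT
      obtain ⟨hTm, haT⟩ := Finset.mem_filter.mp hT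
      obtain ⟨hTsub, hTcard⟩ := Finset.mem_powersetCard.mp hTm
      obtain ⟨A, haA, rfl⟩ : ∃ A, a ∉ A ∧ T = insert a A :=
        ⟨T.erase a, Finset.notMem_erase a T, (Finset.insert_erase haT).symm⟩
      simp only [Finset.erase_insert haA]
      have hAsub : A ⊆ X' := (Finset.subset_insert a A).trans hTsub
      have hanotin : a ∉ X' \ insert a A :=
        fun h => (Finset.mem_sdiff.mp h).2 (Finset.mem_insert_self a A)
      have hXA : X' \ A = insert a (X' \ insert a A) := by
        ext b
        by_cases hba : b = a
        · subst hba; simp [ha, haA]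
        · simp only [Finset.mem_sdiff, Finset.mem_insert, hba, false_or]
      simp only [Polynomial.eval_mul, Polynomial.eval_C, Polynomial.eval_pow,
        Polynomial.eval_add, Polynomial.eval_one, Polynomial.eval_X, Polynomial.eval_prod,
        Polynomial.eval_sub, Qp_eval]
      rw [CT, CT, hXA]
      rw [Finset.prod_insert haA, Finset.prod_insert haA, Finset.prod_insert hanotin]
      have hden2 : ∏ i ∈ A, ∏ j ∈ insert a (X' \ insert a A), (j - i)
          = (∏ i ∈ A, (a - i)) * ∏ i ∈ A, ∏ j ∈ X' \ insert a A, (j - i) := by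
        rw [← Finset.prod_mul_distrib]
        exact Finset.prod_congr rfl fun i _ => Finset.prod_insert hanotin
      rw [hden2]
      have hcardR : (X' \ insert a A).card = X'.card - (k' + 1) := by
        rw [Finset.card_sdiff_of_subset hTsub, hTcard]
      have hsign0 : ∏ j ∈ X' \ insert a A, (a - j)
          = (-1) ^ (X'.card - (k' + 1)) * ∏ j ∈ X' \ insert a A, (j - a) := by
        rw [prod_sub_comm, hcardR]
      rw [hsign0]
      have hsign : ((-1 : F)) ^ (X'.card - k') = (-1) ^ (X'.card - (k' + 1)) * (-1) := by
        rw [← pow_succ]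
        congr 1
        omega
      rw [hsign]
      have h1 : (∏ j ∈ X' \ insert a A, (j - a)) ≠ 0 := prod_sub_ne_zero hanotin
      have h2 : (∏ i ∈ A, (a - i)) ≠ 0 := prod_sub_ne_zero' haA
      have h3 : (∏ i ∈ A, ∏ j ∈ X' \ insert a A, (j - i)) ≠ 0 := by
        rw [Finset.prod_ne_zero_iff]
        intro i hi
        exact prod_sub_ne_zero fun h =>
          (Finset.mem_sdiff.mp h).2 (Finset.mem_insert_of_mem hi)
      field_simp
  rw [h3, ← Finset.sum_add_distrib]
  exact Finset.sum_eq_zero fun A _ => by ring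

lemma keyD (β : F) (y : ℕ → F) (X' : Finset F) (k' : ℕ) (hk : k' + 1 ≤ X'.card) :
    (Phi β y X' (X'.card - k') (k' + 1) k').natDegree ≤ X'.card := by
  rw [Phi]
  refine le_trans (Polynomial.natDegree_add_le _ _) (max_le ?_ ?_)
  · refine Polynomial.natDegree_sum_le_of_forall_le _ _ fun T hT => ?_
    refine le_trans (Polynomial.natDegree_C_mul_le _ _) ?_
    refine le_trans (Polynomial.natDegree_mul_le) ?_
    obtain ⟨hTsub, hTcard⟩ := Finset.mem_powersetCard.mp hT
    have h1 : (Qp β y (k' + 1)).natDegree ≤ k' + 1 := Qp_natDegree_le _ _ _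
    have h2 : ((∏ j ∈ X' \ T, (Polynomial.X - Polynomial.C j)) : Polynomial F).natDegree
        ≤ (X' \ T).card := by
      refine le_trans (Polynomial.natDegree_prod_le _ _) ?_
      simp [Polynomial.natDegree_X_sub_C]
    have h3 : (X' \ T).card = X'.card - (k' + 1) := by
      rw [Finset.card_sdiff_of_subset hTsub, hTcard]
    omega
  · refine Polynomial.natDegree_sum_le_of_forall_le _ _ fun T hT => ?_
    refine le_trans (Polynomial.natDegree_C_mul_le _ _) ?_
    refine le_trans (Polynomial.natDegree_mul_le) ?_
    obtain ⟨hTsub, hTcard⟩ := Finset.mem_powersetCard.mp hT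
    have h1 : ((1 + Polynomial.C β * Polynomial.X : Polynomial F)
        ^ (X'.card - k')).natDegree ≤ X'.card - k' := by
      refine le_trans Polynomial.natDegree_pow_le ?_
      have : (1 + Polynomial.C β * Polynomial.X : Polynomial F).natDegree ≤ 1 := by
        refine le_trans (Polynomial.natDegree_add_le _ _) (max_le ?_ ?_)
        · simp
        · exact le_trans (Polynomial.natDegree_C_mul_le _ _) Polynomial.natDegree_X_le
      calc (X'.card - k') * (1 + Polynomial.C β * Polynomial.X : Polynomial F).natDegree
          ≤ (X'.card - k') * 1 := Nat.mul_le_mul_left _ this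
        _ = X'.card - k' := by omega
    have h2 : ((∏ i ∈ T, (Polynomial.X - Polynomial.C i)) : Polynomial F).natDegree
        ≤ T.card := by
      refine le_trans (Polynomial.natDegree_prod_le _ _) ?_
      simp [Polynomial.natDegree_X_sub_C]
    omega

lemma coeff_beta_zero (y : ℕ → F) (X' : Finset F) (k' : ℕ) (hk : k' + 1 ≤ X'.card) :
    (Phi (0 : F) y X' (X'.card - k') (k' + 1) k').coeff X'.card
      = G (0 : F) y X' (k' + 1) := by
  rw [Phi, Polynomial.coeff_add, Polynomial.finset_sum_coeff, Polynomial.finset_sum_coeff]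
  have hQmonic : (Qp (0 : F) y (k' + 1)).Monic := by
    refine Polynomial.monic_prod_of_monic _ _ fun t _ => ?_
    simpa using Polynomial.monic_X_add_C (y t)
  have hQdeg : (Qp (0 : F) y (k' + 1)).natDegree = k' + 1 := by
    rw [Qp, Polynomial.natDegree_prod_of_monic _ _
      (fun t _ => by simpa using Polynomial.monic_X_add_C (y t))]
    have h1 : ∀ t ∈ Finset.range (k' + 1),
        (Polynomial.C (1 + (0 : F) * y t) * Polynomial.X + Polynomial.C (y t)).natDegree
          = 1 := by
      intro t _
      have : (Polynomial.C (1 + (0 : F) * y t) * Polynomial.X + Polynomial.C (y t))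
          = Polynomial.X + Polynomial.C (y t) := by simp
      rw [this, Polynomial.natDegree_X_add_C]
    rw [Finset.sum_congr rfl h1]
    simp
  have hfirst : ∑ T ∈ X'.powersetCard (k' + 1),
      (Polynomial.C (CT (0 : F) y X' (X'.card - k') (k' + 1) T)
        * (Qp (0 : F) y (k' + 1)
            * ∏ j ∈ X' \ T, (Polynomial.X - Polynomial.C j))).coeff X'.card
      = ∑ T ∈ X'.powersetCard (k' + 1), CT (0 : F) y X' (X'.card - k') (k' + 1) T := by
    refine Finset.sum_congr rfl fun T hT => ?_
    obtain ⟨hTsub, hTcard⟩ := Finset.mem_powersetCard.mp hT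
    have hPmonic : ((∏ j ∈ X' \ T, (Polynomial.X - Polynomial.C j)) : Polynomial F).Monic :=
      Polynomial.monic_prod_of_monic _ _ fun j _ => Polynomial.monic_X_sub_C j
    have hPdeg : ((∏ j ∈ X' \ T, (Polynomial.X - Polynomial.C j)) : Polynomial F).natDegree
        = X'.card - (k' + 1) := by
      rw [Polynomial.natDegree_prod_of_monic _ _ fun j _ => Polynomial.monic_X_sub_C j]
      simp [Polynomial.natDegree_X_sub_C, Finset.card_sdiff_of_subset hTsub, hTcard]
    have hmul : (Qp (0 : F) y (k' + 1)
        * ∏ j ∈ X' \ T, (Polynomial.X - Polynomial.C j)).Monic := hQmonic.mul hPmonic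
    have hmuldeg : (Qp (0 : F) y (k' + 1)
        * ∏ j ∈ X' \ T, (Polynomial.X - Polynomial.C j)).natDegree = X'.card := by
      rw [hQmonic.natDegree_mul hPmonic, hQdeg, hPdeg]
      omega
    rw [Polynomial.coeff_C_mul, ← hmuldeg, hmul.coeff_natDegree, mul_one]
  have hsecond : ∑ T ∈ X'.powersetCard k',
      (Polynomial.C ((-1 : F) ^ (X'.card - k') * CT (0 : F) y X' (X'.card - k') (k' + 1) T)
        * ((1 + Polynomial.C (0 : F) * Polynomial.X) ^ (X'.card - k')
            * ∏ i ∈ T, (Polynomial.X - Polynomial.C i))).coeff X'.card = 0 := by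
    refine Finset.sum_eq_zero fun T hT => ?_
    obtain ⟨hTsub, hTcard⟩ := Finset.mem_powersetCard.mp hT
    have h1 : ((1 + Polynomial.C (0 : F) * Polynomial.X) ^ (X'.card - k')
        * ∏ i ∈ T, (Polynomial.X - Polynomial.C i))
        = ∏ i ∈ T, (Polynomial.X - Polynomial.C i) := by
      simp
    rw [h1, Polynomial.coeff_C_mul, Polynomial.coeff_eq_zero_of_natDegree_lt, mul_zero]
    have : ((∏ i ∈ T, (Polynomial.X - Polynomial.C i)) : Polynomial F).natDegree = k' := by
      rw [Polynomial.natDegree_prod_of_monic _ _ fun j _ => Polynomial.monic_X_sub_C j]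
      simp [Polynomial.natDegree_X_sub_C, hTcard]
    omega
  rw [hfirst, hsecond, add_zero, G]
  refine Finset.sum_congr rfl fun T _hT => ?_
  rw [CT]
  simp

lemma Gz0 (β : F) (y : ℕ → F) (X' : Finset F) (k' : ℕ) (hk : k' + 1 ≤ X'.card)
    (hβ : β ≠ 0) (hgood : ∀ j ∈ X', 1 + β * j ≠ 0) :
    G β y (insert (-β⁻¹) X') (k' + 1) = G β y X' (k' + 1) := by
  have hz10 : 1 + β * (-β⁻¹) = 0 := by
    rw [mul_neg, mul_inv_cancel₀ hβ]; ring
  have hz0 : (-β⁻¹) ∉ X' := fun h => hgood _ h hz10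
  have hcard : (insert (-β⁻¹) X').card = X'.card + 1 := Finset.card_insert_of_notMem hz0
  have hdisj : Disjoint (X'.powersetCard (k' + 1))
      ((X'.powersetCard k').image (insert (-β⁻¹))) := by
    rw [Finset.disjoint_left]
    intro T hT hT2
    obtain ⟨A, _hA, rfl⟩ := Finset.mem_image.mp hT2
    exact hz0 ((Finset.mem_powersetCard.mp hT).1 (Finset.mem_insert_self _ A))
  have hinj : ∀ A ∈ X'.powersetCard k', ∀ B ∈ X'.powersetCard k',
      insert (-β⁻¹) A = insert (-β⁻¹) B → A = B := by
    intro A hA B hB h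
    have hwA : (-β⁻¹) ∉ A := fun hc => hz0 ((Finset.mem_powersetCard.mp hA).1 hc)
    have hwB : (-β⁻¹) ∉ B := fun hc => hz0 ((Finset.mem_powersetCard.mp hB).1 hc)
    rw [← Finset.erase_insert hwA, ← Finset.erase_insert hwB, h]
  simp only [G]
  rw [hcard, show X'.card + 1 - (k' + 1) = X'.card - k' from by omega,
    Finset.powersetCard_succ_insert hz0, Finset.sum_union hdisj, Finset.sum_image hinj]
  have hzero : ∑ A ∈ X'.powersetCard k',
      (∏ i ∈ insert (-β⁻¹) A, (1 + β * i) ^ (X'.card - k'))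
        * (∏ j ∈ insert (-β⁻¹) X' \ insert (-β⁻¹) A, fpow β y j (k' + 1))
        / ∏ i ∈ insert (-β⁻¹) A, ∏ j ∈ insert (-β⁻¹) X' \ insert (-β⁻¹) A, (j - i) = 0 := by
    refine Finset.sum_eq_zero fun A hA => ?_
    have hwA : (-β⁻¹) ∉ A := fun hc => hz0 ((Finset.mem_powersetCard.mp hA).1 hc)
    rw [Finset.prod_insert hwA, hz10, zero_pow (by omega : X'.card - k' ≠ 0), zero_mul,
      zero_mul, zero_div]
  rw [hzero, add_zero]
  refine Finset.sum_congr rfl fun T hT => ?_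
  obtain ⟨hTsub, hTcard⟩ := Finset.mem_powersetCard.mp hT
  have hwT : (-β⁻¹) ∉ T := fun h => hz0 (hTsub h)
  have hwsd : (-β⁻¹) ∉ X' \ T := fun h => hz0 (Finset.mem_sdiff.mp h).1
  rw [Finset.insert_sdiff_of_notMem _ hwT, Finset.prod_insert hwsd, fpow_neg_inv β y _ hβ]
  have hden : ∏ i ∈ T, ∏ j ∈ insert (-β⁻¹) (X' \ T), (j - i)
      = (∏ i ∈ T, (-β⁻¹ - i)) * ∏ i ∈ T, ∏ j ∈ X' \ T, (j - i) := by
    rw [← Finset.prod_mul_distrib]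
    exact Finset.prod_congr rfl fun i _ => Finset.prod_insert hwsd
  rw [hden]
  have hfac : ∏ i ∈ T, (-β⁻¹ - i) = (-β⁻¹) ^ (k' + 1) * ∏ i ∈ T, (1 + β * i) := by
    have h1 : ∀ i ∈ T, -β⁻¹ - i = -β⁻¹ * (1 + β * i) := by
      intro i _
      rw [mul_add, mul_one, neg_mul, ← mul_assoc, inv_mul_cancel₀ hβ]
      ring
    rw [Finset.prod_congr rfl h1, Finset.prod_mul_distrib, Finset.prod_const, hTcard]
  rw [hfac]
  have hexp : ∏ i ∈ T, (1 + β * i) ^ (X'.card - k')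
      = (∏ i ∈ T, (1 + β * i) ^ (X'.card - (k' + 1))) * ∏ i ∈ T, (1 + β * i) := by
    rw [← Finset.prod_mul_distrib]
    refine Finset.prod_congr rfl fun i _ => ?_
    rw [← pow_succ]
    congr 1
    omega
  rw [hexp]
  have hP1 : (∏ i ∈ T, (1 + β * i)) ≠ 0 :=
    Finset.prod_ne_zero_iff.mpr fun i hi => hgood i (hTsub hi)
  have hzpow : ((-β⁻¹ : F)) ^ (k' + 1) ≠ 0 :=
    pow_ne_zero _ (neg_ne_zero.mpr (inv_ne_zero hβ))
  have hd : (∏ i ∈ T, ∏ j ∈ X' \ T, (j - i)) ≠ 0 := dd_ne_zero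
  field_simp
  ring_nf
  simp only [inv_inv, inv_pow]
  field_simp

lemma step (β : F) (y : ℕ → F) (X' : Finset F) (k' : ℕ) (hk : k' + 1 ≤ X'.card)
    (hgood : β ≠ 0 → ∀ j ∈ X', 1 + β * j ≠ 0)
    (IH : G β y X' (k' + 1) = 1)
    {z : F} (hz : z ∉ X') : G β y (insert z X') (k' + 1) = 1 := by
  set W := (∏ j ∈ X', (Polynomial.X - Polynomial.C j) : Polynomial F) with hW
  have hWmonic : W.Monic :=
    Polynomial.monic_prod_of_monic _ _ fun j _ => Polynomial.monic_X_sub_C j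
  have hWdeg : W.natDegree = X'.card := by
    rw [hW, Polynomial.natDegree_prod_of_monic _ _ fun j _ => Polynomial.monic_X_sub_C j]
    simp [Polynomial.natDegree_X_sub_C]
  set c := (Phi β y X' (X'.card - k') (k' + 1) k').coeff X'.card with hc
  have hPhiW : Phi β y X' (X'.card - k') (k' + 1) k' = Polynomial.C c * W := by
    have hψdeg : (Phi β y X' (X'.card - k') (k' + 1) k'
        - Polynomial.C c * W).natDegree ≤ X'.card :=
      le_trans (Polynomial.natDegree_sub_le _ _) (max_le (keyD β y X' k' hk)
        (le_trans (Polynomial.natDegree_C_mul_le _ _) hWdeg.le))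
    have hWcoeff : W.coeff X'.card = 1 := by
      rw [← hWdeg]; exact hWmonic.coeff_natDegree
    have hψcoeff : (Phi β y X' (X'.card - k') (k' + 1) k'
        - Polynomial.C c * W).coeff X'.card = 0 := by
      rw [Polynomial.coeff_sub, Polynomial.coeff_C_mul, hWcoeff, ← hc]
      ring
    have heval : ∀ b ∈ X', (Phi β y X' (X'.card - k') (k' + 1) k'
        - Polynomial.C c * W).eval b = 0 := by
      intro b hb
      rw [Polynomial.eval_sub, Polynomial.eval_mul, keyZ β y X' k' hk hb]
      have hWb : W.eval b = 0 := by
        rw [hW, Polynomial.eval_prod]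
        exact Finset.prod_eq_zero hb (by simp)
      rw [hWb]
      ring
    have hψ : Phi β y X' (X'.card - k') (k' + 1) k' - Polynomial.C c * W = 0 := by
      rcases lt_or_eq_of_le hψdeg with h | h
      · exact Polynomial.eq_zero_of_natDegree_lt_card_of_eval_eq_zero' _ X' heval h
      · exact Polynomial.leadingCoeff_eq_zero.mp
          (by rw [Polynomial.leadingCoeff, h, hψcoeff])
    exact sub_eq_zero.mp hψ
  have keyC : ∀ w : F, w ∉ X' → G β y (insert w X') (k' + 1) = c := by
    intro w hw
    have h := keyE β y X' k' hk hw
    rw [hPhiW, Polynomial.eval_mul, Polynomial.eval_C] at h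
    have hWe : W.eval w = ∏ j ∈ X', (w - j) := by
      rw [hW, Polynomial.eval_prod]
      simp
    rw [hWe] at h
    exact mul_right_cancel₀ (prod_sub_ne_zero' hw) h
  have hc1 : c = 1 := by
    by_cases hβ : β = 0
    · subst hβ
      rw [hc, coeff_beta_zero y X' k' hk, IH]
    · have hz10 : 1 + β * (-β⁻¹) = 0 := by
        rw [mul_neg, mul_inv_cancel₀ hβ]; ring
      have hz0 : (-β⁻¹) ∉ X' := fun h => hgood hβ _ h hz10
      rw [← keyC (-β⁻¹) hz0, Gz0 β y X' k' hk hβ (hgood hβ), IH]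
  rw [keyC z hz, hc1]

lemma G_zero_k (β : F) (y : ℕ → F) (X : Finset F) : G β y X 0 = 1 := by
  simp [G, fpow]

lemma G_self (β : F) (y : ℕ → F) (X : Finset F) : G β y X X.card = 1 := by
  simp [G, Finset.powersetCard_self, Finset.sdiff_self]

lemma G_eq_one (β : F) (y : ℕ → F) :
    ∀ (N : ℕ) (X : Finset F), X.card ≤ N → ∀ k ≤ X.card, G β y X k = 1 := by
  intro N
  induction N with
  | zero =>
    intro X hX k hk
    have hk0 : k = 0 := by omega
    subst hk0
    exact G_zero_k β y X
  | succ N IHN =>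
    intro X hX k hk
    rcases Nat.eq_zero_or_pos k with rfl | hk0
    · exact G_zero_k β y X
    rcases eq_or_lt_of_le hk with hkc | hkc
    · rw [hkc]
      exact G_self β y X
    obtain ⟨k', rfl⟩ : ∃ k', k = k' + 1 := ⟨k - 1, by omega⟩
    have hpick : ∃ ξ ∈ X, (β ≠ 0 → ∀ j ∈ X.erase ξ, 1 + β * j ≠ 0) := by
      by_cases hex : ∃ a ∈ X, 1 + β * a = 0
      · obtain ⟨ξ, hξX, hξ0⟩ := hex
        refine ⟨ξ, hξX, fun hβ j hj hj0 => ?_⟩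
        have hjξ : β * j = β * ξ :=
          add_left_cancel (a := (1 : F)) (by rw [hj0, hξ0])
        exact (Finset.mem_erase.mp hj).1 (mul_left_cancel₀ hβ hjξ)
      · have hne : X.Nonempty := Finset.card_pos.mp (by omega)
        obtain ⟨ξ, hξX⟩ := hne
        exact ⟨ξ, hξX, fun _ j hj hj0 => hex ⟨j, Finset.mem_of_mem_erase hj, hj0⟩⟩
    obtain ⟨ξ, hξX, hgood⟩ := hpick
    have hcard : (X.erase ξ).card = X.card - 1 := Finset.card_erase_of_mem hξX
    have hIH : G β y (X.erase ξ) (k' + 1) = 1 :=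
      IHN (X.erase ξ) (by omega) (k' + 1) (by omega)
    have hstep := step β y (X.erase ξ) k' (by omega) hgood hIH (Finset.notMem_erase ξ X)
    rwa [Finset.insert_erase hξX] at hstep

end Good

/-- Another generalization of Good's identity:
`1 = Σ_{S ∈ binom([n],k)} (∏_{i∈S}(1+βx_i)^{n−k} ∏_{j∈S̄}[x_j|y]^k) / ∏_{i∈S}∏_{j∈S̄}(x_j − x_i)`. -/
theorem stmt6 {F : Type*} [Field F] (n k : ℕ) (hkn : k ≤ n) (β : F) (y : ℕ → F)
    (x : Fin n → F) (hx : Function.Injective x) :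
    (1 : F) = ∑ S : {S : Finset (Fin n) // S.card = k},
        (∏ i ∈ S.1, (1 + β * x i) ^ (n - k)) * (∏ j ∈ S.1ᶜ, fpow β y (x j) k)
          / ∏ i ∈ S.1, ∏ j ∈ S.1ᶜ, (x j - x i) := by
  classical
  have hYcard : (Finset.univ.image x).card = n := by
    rw [Finset.card_image_of_injective _ hx, Finset.card_univ, Fintype.card_fin]
  have hG : G β y (Finset.univ.image x) k = 1 :=
    G_eq_one β y (Finset.univ.image x).card (Finset.univ.image x) le_rfl k
      (by rw [hYcard]; exact hkn)
  rw [eq_comm]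
  calc ∑ S : {S : Finset (Fin n) // S.card = k},
        (∏ i ∈ S.1, (1 + β * x i) ^ (n - k)) * (∏ j ∈ S.1ᶜ, fpow β y (x j) k)
          / ∏ i ∈ S.1, ∏ j ∈ S.1ᶜ, (x j - x i)
      = ∑ S ∈ Finset.univ.powersetCard k,
        (∏ i ∈ S, (1 + β * x i) ^ (n - k)) * (∏ j ∈ Sᶜ, fpow β y (x j) k)
          / ∏ i ∈ S, ∏ j ∈ Sᶜ, (x j - x i) := by
        exact (Finset.sum_subtype (Finset.univ.powersetCard k)
          (fun S => Finset.mem_powersetCard_univ)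
          (fun S => (∏ i ∈ S, (1 + β * x i) ^ (n - k)) * (∏ j ∈ Sᶜ, fpow β y (x j) k)
            / ∏ i ∈ S, ∏ j ∈ Sᶜ, (x j - x i))).symm
    _ = G β y (Finset.univ.image x) k := by
        rw [G, hYcard]
        refine Finset.sum_bij (fun S _ => S.image x) ?_ ?_ ?_ ?_
        · intro S hS
          refine Finset.mem_powersetCard.mpr ⟨Finset.image_subset_image (Finset.subset_univ S),
            ?_⟩
          rw [Finset.card_image_of_injective _ hx,
            (Finset.mem_powersetCard.mp hS).2]
        · intro S₁ _ S₂ _ h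
          exact Finset.image_injective hx h
        · intro T hT
          obtain ⟨hTsub, hTcard⟩ := Finset.mem_powersetCard.mp hT
          obtain ⟨S, _hSsub, rfl⟩ := Finset.subset_image_iff.mp hTsub
          refine ⟨S, Finset.mem_powersetCard.mpr ⟨Finset.subset_univ S, ?_⟩, rfl⟩
          rw [← Finset.card_image_of_injective S hx, hTcard]
        · intro S _
          have hinjS : ∀ a ∈ S, ∀ b ∈ S, x a = x b → a = b := fun a _ b _ h => hx h
          have hinjSc : ∀ a ∈ Sᶜ, ∀ b ∈ Sᶜ, x a = x b → a = b := fun a _ b _ h => hx h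
          have hcompl : Finset.univ.image x \ S.image x = Finset.image x Sᶜ := by
            rw [Finset.compl_eq_univ_sdiff, Finset.image_sdiff _ _ hx]
          rw [hcompl, Finset.prod_image hinjS, Finset.prod_image hinjSc,
            Finset.prod_image hinjS]
          congr 1
          refine Finset.prod_congr rfl fun i _ => ?_
          rw [Finset.prod_image hinjSc]
    _ = 1 := hG
end
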